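/- Let F₂ be the free group on generators a, b and p : F₂ ⟶ C_n × C_n the surjection sending a, b to the two standard generators, with kernel R normally generated by aⁿ, bⁿ, and [a,b]. In the quotient Q = F₂/[R,F₂], the image z of [a,b] is central and satisfies zⁿ = 1. -/

import Mathlib

open Subgroup
open scoped commutatorElement

/-- If `⁅g,h⁆` is central, then `⁅g^k, h⁆ = ⁅g,h⁆^k`. -/
lemma aux17_comm_pow {G : Type*} [Group G] (g h : G)
    (hz : ∀ q : G, ⁅g, h⁆ * q = q * ⁅g, h⁆) (k : ℕ) :
    ⁅g ^ k, h⁆ = ⁅g, h⁆ ^ k := by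
  have hcg : Commute ⁅g, h⁆ g := (hz g)
  have key : ∀ m : ℕ, g ^ m * h * (g ^ m)⁻¹ = ⁅g, h⁆ ^ m * h := by
    intro m
    induction m with
    | zero => simp
    | succ m ih =>
      have h1 : g ^ (m + 1) * h * (g ^ (m + 1))⁻¹
          = g * (g ^ m * h * (g ^ m)⁻¹) * g⁻¹ := by group
      have h2 : Commute (⁅g, h⁆ ^ m) g := (hcg.pow_left m)
      calc g ^ (m + 1) * h * (g ^ (m + 1))⁻¹
          = g * (⁅g, h⁆ ^ m * h) * g⁻¹ := by rw [h1, ih]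
        _ = ⁅g, h⁆ ^ m * (g * h * g⁻¹) := by
            rw [← mul_assoc, ← mul_assoc, ← h2.eq]; simp [mul_assoc]
        _ = ⁅g, h⁆ ^ m * (⁅g, h⁆ * h) := by
            simp [commutatorElement_def, mul_assoc]
        _ = ⁅g, h⁆ ^ (m + 1) * h := by rw [pow_succ, mul_assoc]
  calc ⁅g ^ k, h⁆ = (g ^ k * h * (g ^ k)⁻¹) * h⁻¹ := by
        rw [commutatorElement_def]
    _ = ⁅g, h⁆ ^ k * h * h⁻¹ := by rw [key k, mul_assoc]
    _ = ⁅g, h⁆ ^ k := by group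

/-- Let `p : F₂ ⟶ C_n × C_n` be the surjection from the free group on two generators `a`, `b`
sending them to the standard generators, whose kernel `R` is normally generated by `aⁿ`, `bⁿ`
and `[a,b]`. In the quotient `Q = F₂/[R,F₂]`, the image `z` of `[a,b]` is central and
satisfies `zⁿ = 1`. -/
theorem stmt17 (n : ℕ) (hn : 1 ≤ n)
    (p : FreeGroup (Fin 2) →* Multiplicative (ZMod n) × Multiplicative (ZMod n))
    (hpa : p (FreeGroup.of 0) = (Multiplicative.ofAdd (1 : ZMod n), 1))
    (hpb : p (FreeGroup.of 1) = (1, Multiplicative.ofAdd (1 : ZMod n)))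
    (hps : Function.Surjective p)
    (hR : Subgroup.normalClosure
        {FreeGroup.of 0 ^ n, FreeGroup.of 1 ^ n, ⁅FreeGroup.of (0 : Fin 2), FreeGroup.of 1⁆}
      = p.ker) :
    ((QuotientGroup.mk' ⁅p.ker, (⊤ : Subgroup (FreeGroup (Fin 2)))⁆)
        ⁅FreeGroup.of (0 : Fin 2), FreeGroup.of 1⁆ ∈
      Subgroup.center (FreeGroup (Fin 2) ⧸ ⁅p.ker, (⊤ : Subgroup (FreeGroup (Fin 2)))⁆)) ∧
    ((QuotientGroup.mk' ⁅p.ker, (⊤ : Subgroup (FreeGroup (Fin 2)))⁆)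
        ⁅FreeGroup.of (0 : Fin 2), FreeGroup.of 1⁆) ^ n = 1 := by
  set N : Subgroup (FreeGroup (Fin 2)) := ⁅p.ker, (⊤ : Subgroup (FreeGroup (Fin 2)))⁆ with hN
  set π := QuotientGroup.mk' N with hπ
  set a : FreeGroup (Fin 2) := FreeGroup.of 0 with ha
  set b : FreeGroup (Fin 2) := FreeGroup.of 1 with hb
  -- [a,b] ∈ ker p
  have hab_ker : ⁅a, b⁆ ∈ p.ker := by
    rw [MonoidHom.mem_ker, map_commutatorElement]
    exact commutatorElement_eq_one_iff_commute.mpr (mul_comm _ _)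
  have han_ker : a ^ n ∈ p.ker := by
    rw [← hR]
    exact Subgroup.subset_normalClosure (by left; rfl)
  -- key: commutators of ker elements with anything die in the quotient
  have hdie : ∀ r g : FreeGroup (Fin 2), r ∈ p.ker → π ⁅r, g⁆ = 1 := by
    intro r g hr
    rw [hπ, QuotientGroup.mk'_apply, QuotientGroup.eq_one_iff]
    exact Subgroup.commutator_mem_commutator hr (Subgroup.mem_top g)
  -- centrality
  have hcen : ∀ q, π ⁅a, b⁆ * q = q * π ⁅a, b⁆ := by
    intro q
    obtain ⟨g, rfl⟩ := QuotientGroup.mk'_surjective N q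
    have h1 : π ⁅⁅a, b⁆, g⁆ = 1 := hdie _ g hab_ker
    rw [map_commutatorElement] at h1
    have := commutatorElement_eq_one_iff_commute.mp h1
    exact this.eq
  constructor
  · rw [Subgroup.mem_center_iff]
    intro q
    exact (hcen q).symm
  · have hzpow : π ⁅a, b⁆ ^ n = ⁅π a ^ n, π b⁆ := by
      have : ∀ q, ⁅π a, π b⁆ * q = q * ⁅π a, π b⁆ := by
        intro q
        have := hcen q
        rwa [map_commutatorElement] at this
      rw [map_commutatorElement, ← aux17_comm_pow (π a) (π b) this n]
    rw [hzpow, ← map_pow]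
    exact hdie _ b han_ker
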